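/- arXiv:1912.11165 — 3 statements merged into one kernel-verified Lean document; each statement's English description precedes it below -/
import Mathlib

section
/- Theorem 1 (L-sequence-weighted downward closure property, LDCP): Let δ be a finite database of C-sequences, let k ∈ ℕ, and let L and L' be L-sequences such that L is a sub-L-sequence of L' and |L'| ≤ k. Then LWU_k(L') ≤ LWU_k(L). -/
open scoped Classical

variable {α : Type*}

/-- C-eventset containment: `(c, λ) ⊑ (c', λ')` iff `c ⊆ c'` and `λ = λ'`. -/
def EsetSub (σ τ : Finset α × ℕ) : Prop := σ.1 ⊆ τ.1 ∧ σ.2 = τ.2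

/-- C-sequence containment: `C ⊑ C'` iff there are strictly increasing indices
`j_1 < … < j_n` into `C'` with `σ_k ⊑ σ'_{j_k}` for all `k`. -/
def CSub (C C' : List (Finset α × ℕ)) : Prop :=
  ∃ D : List (Finset α × ℕ), D.Sublist C' ∧ List.Forall₂ EsetSub C D

/-- `C ∼ L` : the C-sequence `C` matches the L-sequence `L`. -/
def Matches (C : List (Finset α × ℕ)) (L : List (Finset α)) : Prop :=
  C.map Prod.fst = L

/-- `L` is a sub-L-sequence of `L'`. -/
def LSub (L L' : List (Finset α)) : Prop :=
  ∃ M : List (Finset α), M.Sublist L' ∧ List.Forall₂ (fun a b => a ⊆ b) L M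

/-- Utility of a C-eventset: `u_e (c, λ) = λ · Σ_{l ∈ c} p l`. -/
noncomputable def ue (p : α → ℝ) (σ : Finset α × ℕ) : ℝ := (σ.2 : ℝ) * ∑ l ∈ σ.1, p l

/-- Utility of a C-sequence: sum of the utilities of its C-eventsets. -/
noncomputable def us (p : α → ℝ) (C : List (Finset α × ℕ)) : ℝ := (C.map (ue p)).sum

/-- `u_maxk (C, k)`: the maximum utility of at most `k` C-eventsets in `C`. -/
noncomputable def umaxk (p : α → ℝ) (C : List (Finset α × ℕ)) (k : ℕ) : ℝ :=
  sSup { x : ℝ | ∃ C'', CSub C'' C ∧ C''.length ≤ k ∧ x = us p C'' }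

/-- `LWU_k(L)`: the L-sequence-weighted utilization of `L` w.r.t. maximum length `k`. -/
noncomputable def LWU (p : α → ℝ) (δ : Finset (List (Finset α × ℕ))) (k : ℕ)
    (L : List (Finset α)) : ℝ :=
  ∑ C ∈ δ, if ∃ C', CSub C' C ∧ Matches C' L then umaxk p C k else 0

/-- `u_max(L)`: the maximum utility of the L-sequence `L` in the database `δ`. -/
noncomputable def umax (p : α → ℝ) (δ : Finset (List (Finset α × ℕ)))
    (L : List (Finset α)) : ℝ :=
  ∑ C ∈ δ, sSup ({ x : ℝ | ∃ C', CSub C' C ∧ Matches C' L ∧ x = us p C' } ∪ {0})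

section Aux
variable {α : Type*}

lemma csub_iff {C C' : List (Finset α × ℕ)} :
    CSub C C' ↔ List.SublistForall₂ EsetSub C C' := by
  rw [List.sublistForall₂_iff]; constructor
  · rintro ⟨D, h1, h2⟩; exact ⟨D, h2, h1⟩
  · rintro ⟨D, h1, h2⟩; exact ⟨D, h2, h1⟩

instance : IsTrans (Finset α × ℕ) EsetSub :=
  ⟨fun a b c hab hbc => ⟨hab.1.trans hbc.1, hab.2.trans hbc.2⟩⟩

lemma key {L : List (Finset α)} {C' : List (Finset α × ℕ)}
    (h : List.SublistForall₂ (fun (a : Finset α) (d : Finset α × ℕ) => a ⊆ d.1) L C') :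
    ∃ C'' : List (Finset α × ℕ), C''.map Prod.fst = L ∧ List.SublistForall₂ EsetSub C'' C' := by
  induction h with
  | nil => exact ⟨[], rfl, List.SublistForall₂.nil⟩
  | @cons a d L' C'' had _ ih =>
    obtain ⟨D, hD1, hD2⟩ := ih
    exact ⟨(a, d.2) :: D, by simp [hD1], List.SublistForall₂.cons ⟨had, rfl⟩ hD2⟩
  | cons_right _ ih =>
    obtain ⟨D, hD1, hD2⟩ := ih
    exact ⟨D, hD1, List.SublistForall₂.cons_right hD2⟩

lemma umaxk_nonneg (p : α → ℝ) (C : List (Finset α × ℕ)) (k : ℕ) :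
    0 ≤ umaxk p C k := by
  have h0 : (0 : ℝ) ∈ { x : ℝ | ∃ C'', CSub C'' C ∧ C''.length ≤ k ∧ x = us p C'' } :=
    ⟨[], ⟨[], List.nil_sublist _, List.Forall₂.nil⟩, by simp, by simp [us]⟩
  by_cases hb : BddAbove { x : ℝ | ∃ C'', CSub C'' C ∧ C''.length ≤ k ∧ x = us p C'' }
  · exact le_csSup hb h0
  · rw [umaxk, Real.sSup_of_not_bddAbove hb]

end Aux

/-- Theorem 1, LDCP: if `L ⊑ L'` and `|L'| ≤ k`, then
`LWU_k(L') ≤ LWU_k(L)`. -/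
theorem ldcp (p : α → ℝ) (hp : ∀ l, 0 ≤ p l)
    (δ : Finset (List (Finset α × ℕ))) (k : ℕ)
    (L L' : List (Finset α)) (hL : LSub L L') (hlen : L'.length ≤ k) :
    LWU p δ k L' ≤ LWU p δ k L := by
  apply Finset.sum_le_sum
  intro C _
  by_cases h : ∃ C', CSub C' C ∧ Matches C' L'
  · obtain ⟨C', hC', hM⟩ := h
    rw [if_pos ⟨C', hC', hM⟩]
    obtain ⟨M, hM1, hM2⟩ := hL
    have hLL' : List.SublistForall₂ (fun (a : Finset α) (b : Finset α) => a ⊆ b) L L' :=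
      List.sublistForall₂_iff.2 ⟨M, hM2, hM1⟩
    have hL2 : List.SublistForall₂ (fun (a : Finset α) (d : Finset α × ℕ) => a ⊆ d.1) L C' := by
      have := hLL'
      rw [← hM, List.sublistForall₂_map_right_iff] at this
      exact this
    obtain ⟨C'', hC''1, hC''2⟩ := key hL2
    have : CSub C'' C := csub_iff.2 (trans_of _ hC''2 (csub_iff.1 hC'))
    rw [if_pos ⟨C'', this, hC''1⟩]
  · rw [if_neg h]
    split
    · exact umaxk_nonneg p C k
    · exact le_refl _
end

section
/- Let δ be a finite database of C-sequences, k ∈ ℕ, and L an L-sequence with |L| ≤ k. Then u_max(L) ≤ LWU_k(L); that is, the L-sequence-weighted utilization is an upper bound on the maximum utility of L in δ. -/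
open scoped Classical

variable {α : Type*}

lemma ue_nonneg (p : α → ℝ) (hp : ∀ l, 0 ≤ p l) (σ : Finset α × ℕ) : 0 ≤ ue p σ :=
  mul_nonneg (Nat.cast_nonneg _) (Finset.sum_nonneg fun l _ => hp l)

lemma us_nonneg (p : α → ℝ) (hp : ∀ l, 0 ≤ p l) (C : List (Finset α × ℕ)) : 0 ≤ us p C :=
  List.sum_nonneg (by
    intro x hx
    obtain ⟨σ, _, rfl⟩ := List.mem_map.1 hx
    exact ue_nonneg p hp σ)

lemma ue_mono (p : α → ℝ) (hp : ∀ l, 0 ≤ p l) {σ τ : Finset α × ℕ} (h : EsetSub σ τ) :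
    ue p σ ≤ ue p τ := by
  unfold ue
  rw [h.2]
  exact mul_le_mul_of_nonneg_left
    (Finset.sum_le_sum_of_subset_of_nonneg h.1 (fun l _ _ => hp l)) (Nat.cast_nonneg _)

lemma us_mono_forall2 (p : α → ℝ) (hp : ∀ l, 0 ≤ p l) {C D : List (Finset α × ℕ)}
    (h : List.Forall₂ EsetSub C D) : us p C ≤ us p D := by
  induction h with
  | nil => exact le_refl _
  | cons hab _ ih =>
    simp only [us, List.map_cons, List.sum_cons] at *
    exact add_le_add (ue_mono p hp hab) ih

lemma us_mono_sublist (p : α → ℝ) (hp : ∀ l, 0 ≤ p l) {D C : List (Finset α × ℕ)}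
    (h : D.Sublist C) : us p D ≤ us p C := by
  induction h with
  | slnil => exact le_refl _
  | cons a _ ih =>
    simp only [us, List.map_cons, List.sum_cons] at *
    exact le_add_of_nonneg_of_le (ue_nonneg p hp a) ih
  | cons_cons a _ ih =>
    simp only [us, List.map_cons, List.sum_cons] at *
    exact add_le_add_right ih _

lemma us_le_of_csub (p : α → ℝ) (hp : ∀ l, 0 ≤ p l) {C' C : List (Finset α × ℕ)}
    (h : CSub C' C) : us p C' ≤ us p C := by
  obtain ⟨D, hDC, hF⟩ := h
  exact (us_mono_forall2 p hp hF).trans (us_mono_sublist p hp hDC)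

/-- for `|L| ≤ k`, `u_max(L) ≤ LWU_k(L)`. -/
theorem umax_le_lwu (p : α → ℝ) (hp : ∀ l, 0 ≤ p l)
    (δ : Finset (List (Finset α × ℕ))) (k : ℕ)
    (L : List (Finset α)) (hL : L.length ≤ k) :
    umax p δ L ≤ LWU p δ k L := by
  unfold umax LWU
  apply Finset.sum_le_sum
  intro C hC
  split_ifs with h
  · apply csSup_le_csSup
    · exact ⟨us p C, by rintro x ⟨C'', hsub, _, rfl⟩; exact us_le_of_csub p hp hsub⟩
    · exact ⟨0, Or.inr rfl⟩
    · rintro x (⟨C', hsub, hm, rfl⟩ | hx)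
      · refine ⟨C', hsub, ?_, rfl⟩
        have := congrArg List.length hm
        simpa using this.le.trans hL
      · exact ⟨[], ⟨[], List.nil_sublist _, List.Forall₂.nil⟩, by simp, by simp only [Set.mem_singleton_iff] at hx; simp [hx, us]⟩
  · have he : { x : ℝ | ∃ C', CSub C' C ∧ Matches C' L ∧ x = us p C' } = ∅ := by
      ext x; simp only [Set.mem_setOf_eq, Set.mem_empty_iff_false, iff_false]
      rintro ⟨C', h1, h2, _⟩
      exact h ⟨C', h1, h2⟩
    rw [he]
    simp
end

section
/- Utility preservation of the coincidence eventset representation: Let s be an E-sequence whose event-intervals have pairwise distinct labels. Then the utility of the C-sequence CER(s) equals the total weighted duration of s; that is, u_s(CER(s)) = Σ_{(l,b,f) ∈ s} p(l) · (f − b). -/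
open scoped Classical

variable {α : Type*}

/-- The E-sequence unique time points of `s`: all beginning and finishing times. -/
def timePoints (s : List (α × ℕ × ℕ)) : Finset ℕ :=
  (s.map (fun e => e.2.1)).toFinset ∪ (s.map (fun e => e.2.2)).toFinset

/-- `Φ_s(t_p, t_q)`: labels of the event-intervals of `s` covering `[t_p, t_q]`. -/
def Phi [DecidableEq α] (s : List (α × ℕ × ℕ)) (tp tq : ℕ) : Finset α :=
  ((s.filter (fun e => decide (e.2.1 ≤ tp ∧ tq ≤ e.2.2))).map Prod.fst).toFinset

/-- The coincidence eventset representation (CER) of the E-sequence `s`. -/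
def CER [DecidableEq α] (s : List (α × ℕ × ℕ)) : List (Finset α × ℕ) :=
  (List.range (((timePoints s).sort (· ≤ ·)).length - 1)).map (fun k =>
    (Phi s (((timePoints s).sort (· ≤ ·)).getD k 0)
           (((timePoints s).sort (· ≤ ·)).getD (k + 1) 0),
     ((timePoints s).sort (· ≤ ·)).getD (k + 1) 0 -
       ((timePoints s).sort (· ≤ ·)).getD k 0))


private lemma list_range_map_sum (n : ℕ) (f : ℕ → ℝ) :
    ((List.range n).map f).sum = ∑ k ∈ Finset.range n, f k := by
  induction n with
  | zero => simp
  | succ n ih => simp [List.range_succ, Finset.sum_range_succ, ih]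

private lemma sum_range_list_sum {β : Type*} (s : List β) (n : ℕ) (g : ℕ → β → ℝ) :
    ∑ k ∈ Finset.range n, (s.map (g k)).sum
      = (s.map fun e => ∑ k ∈ Finset.range n, g k e).sum := by
  induction s with
  | nil => simp
  | cons a t ih => simp [Finset.sum_add_distrib, ih]

private lemma sum_map_filter' {β : Type*} (s : List β) (c : β → Bool) (f : β → ℝ) :
    ((s.filter c).map f).sum = (s.map fun e => if c e then f e else 0).sum := by
  induction s with
  | nil => simp
  | cons a t ih => by_cases h : c a <;> simp [List.filter_cons, h, ih]

private lemma telescope (T : List ℕ) (hT : T.Pairwise (· < ·)) (b f : ℕ)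
    (hb : b ∈ T) (hf : f ∈ T) (hbf : b < f) :
    ∑ k ∈ Finset.range (T.length - 1),
      (if b ≤ T.getD k 0 ∧ T.getD (k + 1) 0 ≤ f
        then ((T.getD (k + 1) 0 - T.getD k 0 : ℕ) : ℝ) else 0)
      = (f : ℝ) - (b : ℝ) := by
  classical
  obtain ⟨i, hi, hTi⟩ := List.mem_iff_getElem.mp hb
  obtain ⟨j, hj, hTj⟩ := List.mem_iff_getElem.mp hf
  have hlt : ∀ a c : ℕ, c < T.length → a < c → T.getD a 0 < T.getD c 0 := by
    intro a c hc hac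
    rw [List.getD_eq_getElem T 0 (lt_trans hac hc), List.getD_eq_getElem T 0 hc]
    exact hT.rel_get_of_lt hac
  have hTi' : T.getD i 0 = b := by rw [List.getD_eq_getElem T 0 hi, hTi]
  have hTj' : T.getD j 0 = f := by rw [List.getD_eq_getElem T 0 hj, hTj]
  have hij : i < j := by
    rcases lt_trichotomy i j with h | h | h
    · exact h
    · exfalso; rw [h, hTj'] at hTi'; omega
    · have := hlt j i hi h; omega
  have key : ∀ k ∈ Finset.range (T.length - 1),
      (if b ≤ T.getD k 0 ∧ T.getD (k + 1) 0 ≤ f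
        then ((T.getD (k + 1) 0 - T.getD k 0 : ℕ) : ℝ) else 0)
      = (if k ∈ Finset.Ico i j
        then ((T.getD (k + 1) 0 : ℝ) - (T.getD k 0 : ℝ)) else 0) := by
    intro k hk
    rw [Finset.mem_range] at hk
    have hk1 : k + 1 < T.length := by omega
    have hstep : T.getD k 0 < T.getD (k + 1) 0 := hlt k (k + 1) hk1 (by omega)
    have hcond : (b ≤ T.getD k 0 ∧ T.getD (k + 1) 0 ≤ f) ↔ k ∈ Finset.Ico i j := by
      rw [Finset.mem_Ico]
      constructor
      · rintro ⟨h1, h2⟩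
        constructor
        · by_contra h
          push_neg at h
          have := hlt k i hi h
          omega
        · by_contra h
          push_neg at h
          have := hlt j (k + 1) hk1 (by omega)
          omega
      · rintro ⟨h1, h2⟩
        constructor
        · rcases lt_or_eq_of_le h1 with h' | h'
          · have := hlt i k (by omega) h'; omega
          · rw [← h', hTi']
        · rcases lt_or_eq_of_le (Nat.succ_le_of_lt h2) with h' | h'
          · have := hlt (k + 1) j hj h'; omega
          · rw [show k + 1 = j from h', hTj']
    by_cases hc : b ≤ T.getD k 0 ∧ T.getD (k + 1) 0 ≤ f
    · rw [if_pos hc, if_pos (hcond.mp hc), Nat.cast_sub hstep.le]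
    · rw [if_neg hc, if_neg (fun h => hc (hcond.mpr h))]
  rw [Finset.sum_congr rfl key, Finset.sum_ite_mem]
  have hinter : Finset.range (T.length - 1) ∩ Finset.Ico i j = Finset.Ico i j := by
    apply Finset.inter_eq_right.mpr
    intro k hk
    rw [Finset.mem_Ico] at hk
    rw [Finset.mem_range]
    omega
  rw [hinter,
      Finset.sum_Ico_eq_sub (fun k => ((T.getD (k + 1) 0 : ℝ) - (T.getD k 0 : ℝ))) hij.le,
      Finset.sum_range_sub (fun k => (T.getD k 0 : ℝ)),
      Finset.sum_range_sub (fun k => (T.getD k 0 : ℝ)), hTi', hTj']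
  ring

/-- Utility preservation of the CER: if the event-intervals of `s` have
pairwise distinct labels, then `u_s(CER(s)) = Σ_{(l,b,f) ∈ s} p(l) · (f − b)`. -/
theorem cer_utility_preservation [DecidableEq α] (p : α → ℝ) (hp : ∀ l, 0 ≤ p l)
    (s : List (α × ℕ × ℕ)) (hbf : ∀ e ∈ s, e.2.1 < e.2.2)
    (hlab : (s.map Prod.fst).Nodup) :
    us p (CER s) = (s.map (fun e => p e.1 * ((e.2.2 - e.2.1 : ℕ) : ℝ))).sum := by
  classical
  have hsort : ((timePoints s).sort (· ≤ ·)).Pairwise (· < ·) := (Finset.sortedLT_sort _).pairwise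
  set T := (timePoints s).sort (· ≤ ·) with hTdef
  unfold us CER
  rw [List.map_map, list_range_map_sum]
  have hterm : ∀ k ∈ Finset.range (T.length - 1),
      (ue p ∘ fun k =>
        (Phi s (T.getD k 0) (T.getD (k + 1) 0), T.getD (k + 1) 0 - T.getD k 0)) k
      = (s.map (fun e => ((T.getD (k + 1) 0 - T.getD k 0 : ℕ) : ℝ) *
          (if e.2.1 ≤ T.getD k 0 ∧ T.getD (k + 1) 0 ≤ e.2.2 then p e.1 else 0))).sum := by
    intro k _
    simp only [Function.comp_apply, ue, Phi]
    have hnd : ((s.filter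
        (fun e => decide (e.2.1 ≤ T.getD k 0 ∧ T.getD (k + 1) 0 ≤ e.2.2))).map
        Prod.fst).Nodup :=
      hlab.sublist ((List.filter_sublist (l := s)).map Prod.fst)
    rw [List.sum_toFinset _ hnd, List.map_map, sum_map_filter', ← List.sum_map_mul_left]
    refine congrArg List.sum (List.map_congr_left fun e _ => ?_)
    simp only [Function.comp_apply, decide_eq_true_eq]
  rw [Finset.sum_congr rfl hterm, sum_range_list_sum]
  refine congrArg List.sum (List.map_congr_left fun e he => ?_)
  have hb : e.2.1 ∈ T := by
    rw [hTdef, Finset.mem_sort]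
    exact Finset.mem_union_left _ (List.mem_toFinset.mpr (List.mem_map.mpr ⟨e, he, rfl⟩))
  have hf : e.2.2 ∈ T := by
    rw [hTdef, Finset.mem_sort]
    exact Finset.mem_union_right _ (List.mem_toFinset.mpr (List.mem_map.mpr ⟨e, he, rfl⟩))
  have hbfe := hbf e he
  calc ∑ k ∈ Finset.range (T.length - 1),
        ((T.getD (k + 1) 0 - T.getD k 0 : ℕ) : ℝ) *
          (if e.2.1 ≤ T.getD k 0 ∧ T.getD (k + 1) 0 ≤ e.2.2 then p e.1 else 0)
      = p e.1 * ∑ k ∈ Finset.range (T.length - 1),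
          (if e.2.1 ≤ T.getD k 0 ∧ T.getD (k + 1) 0 ≤ e.2.2
            then ((T.getD (k + 1) 0 - T.getD k 0 : ℕ) : ℝ) else 0) := by
        rw [Finset.mul_sum]
        apply Finset.sum_congr rfl
        intro k _
        by_cases hc : e.2.1 ≤ T.getD k 0 ∧ T.getD (k + 1) 0 ≤ e.2.2 <;>
          simp [hc, mul_comm]
    _ = p e.1 * ((e.2.2 : ℝ) - (e.2.1 : ℝ)) := by
        rw [telescope T hsort e.2.1 e.2.2 hb hf hbfe]
    _ = p e.1 * ((e.2.2 - e.2.1 : ℕ) : ℝ) := by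
        rw [Nat.cast_sub hbfe.le]
end
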